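/- Let f(t) = t + t^2 + (3/2)t^3 + (5/2)t^4 + (175/40)t^5 + ... be any formal power series over ℚ whose first five coefficients are a₁=1, a₂=1, a₃=3/2, a₄=5/2, a₅=35/8 (i.e., f_P(t) with dim P(n)/n! given by dimensions (1,2,9,60,525)). Then the compositional inverse of −f(−t) has negative coefficient at t^5, namely the coefficient of t^5 is −15/120 = −1/8. -/

import Mathlib

open PowerSeries

/-- Composition `f ∘ g` of formal power series (intended for `g` with zero constant
coefficient): the `n`-th coefficient is that of `∑_{k ≤ n} (coeff k f) · g^k`. -/
noncomputable def PowerSeries.comp {R : Type*} [CommRing R] (f g : PowerSeries R) :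
    PowerSeries R :=
  PowerSeries.mk fun n =>
    PowerSeries.coeff (R := R) n
      (∑ k ∈ Finset.range (n + 1), PowerSeries.C (R := R) (PowerSeries.coeff (R := R) k f) * g ^ k)

private lemma cm (a b : PowerSeries ℚ) (n : ℕ) :
    coeff (R := ℚ) n (a * b) = ∑ i ∈ Finset.range (n+1), coeff (R := ℚ) i a * coeff (R := ℚ) (n-i) b := by
  rw [coeff_mul, Finset.Nat.sum_antidiagonal_eq_sum_range_succ_mk]


/-- For any power series `f` with first five coefficients `1, 1, 3/2, 5/2, 35/8`
(the Hilbert series of the operad P₂), the compositional inverse of `-f(-t)` has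
coefficient `-1/8` at `t^5`; in particular it has a negative coefficient, so by the
Ginzburg–Kapranov criterion P₂ is not Koszul. -/
theorem P2_not_Koszul_obstruction (f h : PowerSeries ℚ)
    (hf0 : constantCoeff (R := ℚ) f = 0)
    (hf1 : coeff (R := ℚ) 1 f = 1) (hf2 : coeff (R := ℚ) 2 f = 1) (hf3 : coeff (R := ℚ) 3 f = 3 / 2)
    (hf4 : coeff (R := ℚ) 4 f = 5 / 2) (hf5 : coeff (R := ℚ) 5 f = 35 / 8)
    (hh0 : constantCoeff (R := ℚ) h = 0)
    (hinv : (-(rescale (-1) f)).comp h = X) :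
    coeff (R := ℚ) 5 h = -(1 / 8) := by
  have hc0 : coeff (R := ℚ) 0 h = 0 := by rwa [coeff_zero_eq_constantCoeff]
  set c1 := coeff (R := ℚ) 1 h with hc1
  set c2 := coeff (R := ℚ) 2 h with hc2
  set c3 := coeff (R := ℚ) 3 h with hc3
  set c4 := coeff (R := ℚ) 4 h with hc4
  set c5 := coeff (R := ℚ) 5 h with hc5
  -- coefficients of h^2
  have q20 : coeff (R := ℚ) 0 (h^2) = 0 := by rw [pow_two, cm]; simp [Finset.sum_range_succ, hc0]
  have q21 : coeff (R := ℚ) 1 (h^2) = 0 := by rw [pow_two, cm]; simp [Finset.sum_range_succ, hc0]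
  have q22 : coeff (R := ℚ) 2 (h^2) = c1*c1 := by rw [pow_two, cm]; simp [Finset.sum_range_succ, hc0, hc1, hc2, hc3, hc4]
  have q23 : coeff (R := ℚ) 3 (h^2) = c1*c2 + c2*c1 := by rw [pow_two, cm]; simp [Finset.sum_range_succ, hc0, hc1, hc2, hc3, hc4]
  have q24 : coeff (R := ℚ) 4 (h^2) = c1*c3 + c2*c2 + c3*c1 := by
    rw [pow_two, cm]; simp [Finset.sum_range_succ, hc0, hc1, hc2, hc3, hc4]
  have q25 : coeff (R := ℚ) 5 (h^2) = c1*c4 + c2*c3 + c3*c2 + c4*c1 := by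
    rw [pow_two, cm]; simp [Finset.sum_range_succ, hc0, hc1, hc2, hc3, hc4]
  have pw : ∀ k : ℕ, h^(k+1) = h^k * h := fun k => pow_succ h k
  -- coefficients of h^3
  have q30 : coeff (R := ℚ) 0 (h^3) = 0 := by rw [pw 2, cm]; simp [Finset.sum_range_succ, hc0]
  have q31 : coeff (R := ℚ) 1 (h^3) = 0 := by rw [pw 2, cm]; simp [Finset.sum_range_succ, hc0, q20]
  have q32 : coeff (R := ℚ) 2 (h^3) = 0 := by rw [pw 2, cm]; simp [Finset.sum_range_succ, hc0, q20, q21]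
  have q33 : coeff (R := ℚ) 3 (h^3) = c1*c1*c1 := by
    rw [pw 2, cm]; simp [Finset.sum_range_succ, hc0, hc1, hc2, hc3, hc4, q20, q21, q22]
  have q34 : coeff (R := ℚ) 4 (h^3) = c1*c1*c2 + (c1*c2+c2*c1)*c1 := by
    rw [pw 2, cm]; simp [Finset.sum_range_succ, hc0, hc1, hc2, hc3, hc4, q20, q21, q22, q23]
  have q35 : coeff (R := ℚ) 5 (h^3) = c1*c1*c3 + (c1*c2+c2*c1)*c2 + (c1*c3+c2*c2+c3*c1)*c1 := by
    rw [pw 2, cm]; simp [Finset.sum_range_succ, hc0, hc1, hc2, hc3, hc4, q20, q21, q22, q23, q24]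
  -- coefficients of h^4
  have q40 : coeff (R := ℚ) 0 (h^4) = 0 := by rw [pw 3, cm]; simp [Finset.sum_range_succ, hc0]
  have q41 : coeff (R := ℚ) 1 (h^4) = 0 := by rw [pw 3, cm]; simp [Finset.sum_range_succ, hc0, q30]
  have q42 : coeff (R := ℚ) 2 (h^4) = 0 := by rw [pw 3, cm]; simp [Finset.sum_range_succ, hc0, q30, q31]
  have q43 : coeff (R := ℚ) 3 (h^4) = 0 := by rw [pw 3, cm]; simp [Finset.sum_range_succ, hc0, q30, q31, q32]
  have q44 : coeff (R := ℚ) 4 (h^4) = c1*c1*c1*c1 := by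
    rw [pw 3, cm]; simp [Finset.sum_range_succ, hc0, hc1, hc2, hc3, hc4, q30, q31, q32, q33]
  have q45 : coeff (R := ℚ) 5 (h^4) = c1*c1*c1*c2 + (c1*c1*c2 + (c1*c2+c2*c1)*c1)*c1 := by
    rw [pw 3, cm]; simp [Finset.sum_range_succ, hc0, hc1, hc2, hc3, hc4, q30, q31, q32, q33, q34]
  -- coefficients of h^5
  have q55 : coeff (R := ℚ) 5 (h^5) = c1*c1*c1*c1*c1 := by
    rw [pw 4, cm]; simp [Finset.sum_range_succ, hc0, hc1, hc2, hc3, hc4, q40, q41, q42, q43, q44]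
  -- g coefficients
  set g := -(rescale (-1) f) with hg
  have cg : ∀ n : ℕ, coeff (R := ℚ) n g = -((-1:ℚ)^n * coeff (R := ℚ) n f) := by
    intro n; rw [hg, map_neg, coeff_rescale]
  have e : ∀ n : ℕ, (∑ k ∈ Finset.range (n + 1), coeff (R := ℚ) k g * coeff (R := ℚ) n (h ^ k)) = coeff (R := ℚ) n (X : PowerSeries ℚ) := by
    intro n
    rw [← hinv, PowerSeries.comp, coeff_mk, map_sum]
    exact Finset.sum_congr rfl fun k _ => (coeff_C_mul _ _ _).symm
  have e1 := e 1
  simp only [Finset.sum_range_succ, Finset.sum_range_zero, cg, pow_zero, pow_one, coeff_one,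
    hc0, hf0, coeff_zero_eq_constantCoeff, coeff_X, q21, q22] at e1
  have e2 := e 2
  simp only [Finset.sum_range_succ, Finset.sum_range_zero, cg, pow_zero, pow_one, coeff_one,
    hc0, hf0, coeff_zero_eq_constantCoeff, coeff_X, q21, q22] at e2
  have e3 := e 3
  simp only [Finset.sum_range_succ, Finset.sum_range_zero, cg, pow_zero, pow_one, coeff_one,
    hc0, hf0, coeff_zero_eq_constantCoeff, coeff_X, q23, q32, q33] at e3
  have e4 := e 4
  simp only [Finset.sum_range_succ, Finset.sum_range_zero, cg, pow_zero, pow_one, coeff_one,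
    hc0, hf0, coeff_zero_eq_constantCoeff, coeff_X, q24, q34, q43, q44] at e4
  have e5 := e 5
  simp only [Finset.sum_range_succ, Finset.sum_range_zero, cg, pow_zero, pow_one, coeff_one,
    hc0, hf0, coeff_zero_eq_constantCoeff, coeff_X, q25, q35, q45, q55] at e5
  rw [hf1] at e1 e2 e3 e4 e5
  rw [hf2] at e2 e3 e4 e5
  rw [hf3] at e3 e4 e5
  rw [hf4] at e4 e5
  rw [hf5] at e5
  norm_num at e1 e2 e3 e4 e5
  rw [← hc1] at e1
  rw [← hc2] at e2
  rw [← hc3] at e3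
  rw [← hc4] at e4
  rw [← hc5] at e5
  have hC1 : c1 = 1 := e1
  rw [hC1] at e2 e3 e4 e5
  have hC2 : c2 = 1 := by linarith
  rw [hC2] at e3 e4 e5
  have hC3 : c3 = 1/2 := by linarith
  rw [hC3] at e4 e5
  have hC4 : c4 = 0 := by linarith
  rw [hC4] at e5
  linarith
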